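/- For every invertible 3×3 real matrix F with positive determinant and every symmetric 3×3 real matrix S, the Frobenius norm satisfies ‖Fᵀ S F⁻ᵀ‖² ≥ (1/2)‖S‖², where F⁻ᵀ denotes the inverse transpose of F. The constant 1/2 is independent of F. -/
import Mathlib


open Matrix

/-- Squared Frobenius norm of a 3×3 real matrix: ‖X‖² = tr(Xᵀ X). -/
noncomputable def frobSq (X : Matrix (Fin 3) (Fin 3) ℝ) : ℝ := (Xᵀ * X).trace

lemma trace_transpose_mul_self_nonneg (A : Matrix (Fin 3) (Fin 3) ℝ) :
    0 ≤ (Aᵀ * A).trace := by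
  rw [Matrix.trace]
  refine Finset.sum_nonneg fun i _ => ?_
  simp only [Matrix.diag_apply, Matrix.mul_apply, Matrix.transpose_apply]
  exact Finset.sum_nonneg fun j _ => mul_self_nonneg _

lemma trace_sq_le_frobSq (M : Matrix (Fin 3) (Fin 3) ℝ) :
    (M * M).trace ≤ frobSq M := by
  have h := trace_transpose_mul_self_nonneg (M - Mᵀ)
  have e1 : (Mᵀ * Mᵀ).trace = (M * M).trace := by
    rw [← Matrix.transpose_mul, Matrix.trace_transpose]
  have e2 : (M * Mᵀ).trace = (Mᵀ * M).trace := Matrix.trace_mul_comm _ _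
  simp only [Matrix.transpose_sub, Matrix.transpose_transpose, Matrix.sub_mul,
    Matrix.mul_sub, Matrix.trace_sub] at h
  unfold frobSq
  linarith

/-- For every invertible 3×3 real matrix `F` with positive determinant and every
symmetric 3×3 real matrix `S`, one has ‖Fᵀ S F⁻ᵀ‖² ≥ (1/2)‖S‖². -/
theorem frobSq_conj_ge_half (F S : Matrix (Fin 3) (Fin 3) ℝ)
    (hF : 0 < F.det) (hS : Sᵀ = S) :
    frobSq (Fᵀ * S * (F⁻¹)ᵀ) ≥ (1 / 2) * frobSq S := by
  have hdet : IsUnit F.det := isUnit_iff_ne_zero.mpr (ne_of_gt hF)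
  set M := Fᵀ * S * (F⁻¹)ᵀ with hM
  have hinv : (F⁻¹)ᵀ * Fᵀ = 1 := by
    rw [← Matrix.transpose_mul, Matrix.mul_nonsing_inv F hdet, Matrix.transpose_one]
  have htr : (M * M).trace = (S * S).trace := by
    have : M * M = Fᵀ * (S * S) * (F⁻¹)ᵀ := by
      rw [hM]
      calc Fᵀ * S * (F⁻¹)ᵀ * (Fᵀ * S * (F⁻¹)ᵀ)
          = Fᵀ * S * ((F⁻¹)ᵀ * Fᵀ) * S * (F⁻¹)ᵀ := by noncomm_ring
        _ = Fᵀ * (S * S) * (F⁻¹)ᵀ := by rw [hinv]; noncomm_ring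
    rw [this, Matrix.trace_mul_comm, ← Matrix.mul_assoc, hinv, Matrix.one_mul]
  have hSfrob : frobSq S = (S * S).trace := by rw [frobSq, hS]
  have h1 := trace_sq_le_frobSq M
  have h2 := trace_transpose_mul_self_nonneg S
  rw [← frobSq] at h2
  rw [htr, ← hSfrob] at h1
  linarith
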